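/- Let M be a matroid and C, D disjoint subsets of E(M). Then λ_M(C ∪ D) = λ_{M/C}(D) + λ_{M∖D}(C), where λ_M denotes the connectivity function of M, M/C contraction of C, and M∖D deletion of D. -/

import Mathlib

open Set Matroid

/-- The deletion of `D` from the matroid `M`. -/
noncomputable def Matroid.del {α : Type*} (M : Matroid α) (D : Set α) : Matroid α :=
  M ↾ (M.E \ D)

/-- The contraction of `C` in the matroid `M`, defined by duality. -/
noncomputable def Matroid.con {α : Type*} (M : Matroid α) (C : Set α) : Matroid α :=
  (M✶ ↾ (M.E \ C))✶

/-- The contraction of the matroid `M` onto `X` (written `M.X` in the literature). -/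
noncomputable def Matroid.contractOnto {α : Type*} (M : Matroid α) (X : Set α) : Matroid α :=
  (M✶ ↾ X)✶

/-- The connectivity `λ_M(X)` of `X` in the matroid `M`: the number of elements of a base `B`
of `M ↾ X` outside a base `A ⊆ B` of the contraction of `M` onto `X`. -/
noncomputable def matConn {α : Type*} (M : Matroid α) (X : Set α) : ℕ∞ :=
  ⨅ p : {p : Set α × Set α //
      (M ↾ X).IsBase p.1 ∧ (M.contractOnto X).IsBase p.2 ∧ p.2 ⊆ p.1},
    ((p : Set α × Set α).1 \ (p : Set α × Set α).2).encard

namespace MatConnAux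

variable {α : Type*} {M : Matroid α} {X C D T B B' A S W W' : Set α}

/-- Two bases inside a common set `S` leave sets of the same size uncovered. -/
lemma nullity_welldef (hB : M.IsBase B) (hB' : M.IsBase B') (hBS : B ⊆ S) (hB'S : B' ⊆ S) :
    (S \ B).encard = (S \ B').encard := by
  have h1 : S \ B = (S \ (B ∪ B')) ∪ (B' \ B) := by
    ext x; by_cases hx : x ∈ B' <;> simp [hx] <;> tauto
  have h2 : S \ B' = (S \ (B ∪ B')) ∪ (B \ B') := by
    ext x; by_cases hx : x ∈ B <;> simp [hx] <;> tauto
  have hd1 : Disjoint (S \ (B ∪ B')) (B' \ B) := by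
    rw [Set.disjoint_left]; rintro x ⟨-, hx⟩ ⟨hx', -⟩; exact hx (Or.inr hx')
  have hd2 : Disjoint (S \ (B ∪ B')) (B \ B') := by
    rw [Set.disjoint_left]; rintro x ⟨-, hx⟩ ⟨hx', -⟩; exact hx (Or.inl hx')
  rw [h1, h2, encard_union_eq hd1, encard_union_eq hd2, hB'.encard_sdiff_comm hB]

/-- `M.con C` base from a base of `M` meeting `C` in a basis of `C`. -/
lemma con_base_of (hC : C ⊆ M.E) (hT : M.IsBasis T C) (hB : M.IsBase (B ∪ T))
    (hdj : Disjoint B C) : (M.con C).IsBase B := by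
  have hBE : B ⊆ M.E := subset_union_left.trans hB.subset_ground
  have hBW : B ⊆ M.E \ C := subset_diff.mpr ⟨hBE, hdj⟩
  have hTC : T ⊆ C := hT.subset
  rw [Matroid.con, dual_isBase_iff']
  refine ⟨?_, by simpa using hBW⟩
  have hWE : M.E \ C ⊆ M✶.E := by rw [dual_ground]; exact diff_subset
  rw [show (M✶ ↾ (M.E \ C)).E = M.E \ C from rfl, isBase_restrict_iff', isBasis'_iff_isBasis hWE]
  -- show M✶.IsBasis ((M.E \ C) \ B) (M.E \ C)
  have hIndep : M✶.Indep ((M.E \ C) \ B) := by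
    refine (hB.compl_isBase_dual).indep.subset ?_
    rintro x ⟨⟨hxE, hxC⟩, hxB⟩
    exact ⟨hxE, fun h => h.elim hxB (fun ht => hxC (hTC ht))⟩
  refine hIndep.isBasis_of_maximal_subset diff_subset ?_ hWE
  rintro J hJ hsub hJW x hxJ
  by_contra hxmem
  have hxB : x ∈ B := by
    rcases hJW hxJ with ⟨hxE, hxC⟩
    by_contra hxB
    exact hxmem ⟨⟨hxE, hxC⟩, hxB⟩
  -- insert x ((M.E \ C) \ B) is M✶-indep
  have hJ' : M✶.Indep (insert x ((M.E \ C) \ B)) :=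
    hJ.subset (insert_subset hxJ hsub)
  obtain ⟨Wp, hWp, hsubWp⟩ := hJ'.exists_isBase_superset
  have hMB : M.IsBase (M.E \ Wp) := hWp.compl_isBase_of_dual
  have hcompl : M.E \ Wp ⊆ M.closure ((B ∪ T) \ {x}) := by
    rintro y ⟨hyE, hyWp⟩
    have hynx : y ≠ x := fun h => hyWp (hsubWp (by simp [h]))
    by_cases hyC : y ∈ C
    · exact M.closure_subset_closure
        (subset_diff_singleton subset_union_right
          (fun hxT => hdj.ne_of_mem hxB (hTC hxT) rfl)) (hT.subset_closure hyC)
    · have hyB : y ∈ B := by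
        by_contra hyB
        exact hyWp (hsubWp (Or.inr ⟨⟨hyE, hyC⟩, hyB⟩))
      refine M.subset_closure _ ?_ ⟨Or.inl hyB, hynx⟩
      exact diff_subset.trans hB.subset_ground
  have hxcl : x ∈ M.closure ((B ∪ T) \ {x}) := by
    have := closure_subset_closure_of_subset_closure hcompl
    rw [hMB.closure_eq] at this
    exact this (hBE hxB)
  exact hB.indep.notMem_closure_sdiff_of_mem (Or.inl hxB) hxcl

lemma contractOnto_ground (M : Matroid α) (X : Set α) : (M.contractOnto X).E = X := rfl

lemma con_ground (M : Matroid α) (C : Set α) : (M.con C).E = M.E \ C := rfl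

lemma del_ground (M : Matroid α) (D : Set α) : (M.del D).E = M.E \ D := rfl

/-- key fact about bases of `M.contractOnto X` : they glue with any basis of `M.E \ X`. -/
lemma contractOnto_base_union (hX : X ⊆ M.E) (hA : (M.contractOnto X).IsBase A)
    (hT : M.IsBasis T (M.E \ X)) : M.IsBase (A ∪ T) := by
  have hAX : A ⊆ X := hA.subset_ground
  have hXd : X ⊆ M✶.E := by rwa [dual_ground]
  have hJ : M✶.IsBasis (X \ A) X := by
    rw [Matroid.contractOnto, dual_isBase_iff'] at hA
    obtain ⟨h1, -⟩ := hA
    rw [show (M✶ ↾ X).E = X from rfl] at h1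
    rw [isBase_restrict_iff', isBasis'_iff_isBasis hXd] at h1
    exact h1
  -- Step 1: find a base of M of the form A ∪ T₀
  have hEA : M.E \ A ⊆ M✶.E := by rw [dual_ground]; exact diff_subset
  obtain ⟨Wd, hWd, hJWd⟩ := hJ.indep.subset_isBasis_of_subset
    (diff_subset_diff_left hX) hEA
  have hWdBase : M✶.IsBase Wd := by
    refine hWd.indep.isBase_of_ground_subset_closure ?_
    have h1 : X ⊆ M✶.closure (M.E \ A) :=
      (hJ.subset_closure).trans (M✶.closure_subset_closure (diff_subset_diff_left hX))
    have h2 : M.E \ X ⊆ M✶.closure (M.E \ A) :=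
      (diff_subset_diff_right hAX).trans (M✶.subset_closure _ hEA)
    rw [hWd.closure_eq_closure, dual_ground]
    intro x hx
    by_cases hxX : x ∈ X
    · exact h1 hxX
    · exact h2 ⟨hx, hxX⟩
  have hBstar : M.IsBase (M.E \ Wd) := hWdBase.compl_isBase_of_dual
  have hABstar : A ⊆ M.E \ Wd :=
    subset_diff.mpr ⟨hAX.trans hX, Set.disjoint_left.mpr
      (fun x hxA hxW => (hWd.subset hxW).2 hxA)⟩
  have hBstar_sub : M.E \ Wd ⊆ A ∪ (M.E \ X) := by
    rintro x ⟨hxE, hxW⟩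
    by_cases hxX : x ∈ X
    · by_cases hxA : x ∈ A
      · exact Or.inl hxA
      · exact absurd (hJWd ⟨hxX, hxA⟩) hxW
    · exact Or.inr ⟨hxE, hxX⟩
  -- Step 2: A ∪ T is spanning
  have hATE : A ∪ T ⊆ M.E := union_subset (hAX.trans hX) (hT.subset.trans diff_subset)
  have hspan : M.Spanning (A ∪ T) := by
    rw [spanning_iff_ground_subset_closure hATE]
    have hsub : M.E \ Wd ⊆ M.closure (A ∪ T) := by
      intro x hx
      rcases hBstar_sub hx with hxA | hxZ
      · exact M.subset_closure _ hATE (Or.inl hxA)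
      · exact (M.closure_subset_closure subset_union_right) (hT.subset_closure hxZ)
    have := closure_subset_closure_of_subset_closure hsub
    rw [hBstar.closure_eq] at this
    exact this
  -- Step 3: extract a base between T and A ∪ T; it must be all of A ∪ T
  obtain ⟨Bs, hBs, hBsSub⟩ := hspan.exists_isBase_subset
  obtain ⟨B9, hB9, hTB9, hB9sub⟩ := hT.indep.exists_isBase_subset_union_isBase hBs
  have hB9sub' : B9 ⊆ A ∪ T := hB9sub.trans (union_subset subset_union_right hBsSub)
  set A9 := B9 \ T with hA9def
  have hA9A : A9 ⊆ A := by
    rintro x ⟨hx, hxT⟩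
    rcases hB9sub' hx with h | h
    · exact h
    · exact absurd h hxT
  have hB9eq : B9 = A9 ∪ T := by
    rw [hA9def, diff_union_of_subset hTB9]
  have hA9dj : Disjoint A9 (M.E \ X) := Set.disjoint_left.mpr
    (fun x hx hxZ => hxZ.2 (hAX (hA9A hx)))
  have hA9base : (M.con (M.E \ X)).IsBase A9 :=
    con_base_of diff_subset hT (by rwa [← hB9eq]) hA9dj
  have hconEq : M.con (M.E \ X) = M.contractOnto X := by
    rw [Matroid.con, Matroid.contractOnto, diff_diff_cancel_left hX]
  rw [hconEq] at hA9base
  have : A9 = A := hA9base.eq_of_subset_isBase hA (hA9A)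
  rw [← this, ← hB9eq]
  exact hB9


/-- Key inequality: the "nullity" of `B ∪ T` does not depend on the basis `B` of `X`. -/
lemma star_aux (hX : X ⊆ M.E) (hB : M.IsBasis B X) (hB' : M.IsBasis B' X)
    (hT : M.IsBasis T (M.E \ X)) (hW : M.IsBase W) (hWs : W ⊆ B ∪ T)
    (hW' : M.IsBase W') (hW's : W' ⊆ B' ∪ T) (hTW' : T ⊆ W') :
    ((B' ∪ T) \ W').encard ≤ ((B ∪ T) \ W).encard := by
  by_contra hlt
  push_neg at hlt
  set k := ((B ∪ T) \ W).encard with hk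
  have hkne : k ≠ ⊤ := ne_top_of_lt hlt
  have hk1 : k + 1 ≤ ((B' ∪ T) \ W').encard := (ENat.add_one_le_iff hkne).mpr hlt
  obtain ⟨Φ, hΦsub, hΦcard⟩ := Set.exists_subset_encard_eq hk1
  have hBX : B ⊆ X := hB.subset
  have hB'X : B' ⊆ X := hB'.subset
  have hTZ : T ⊆ M.E \ X := hT.subset
  have hTXdj : Disjoint T X := Set.disjoint_left.mpr (fun x hx => (hTZ hx).2)
  have hdiff : (B' ∪ T) \ W' = B' \ W' := by
    ext x
    simp only [mem_diff, mem_union]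
    constructor
    · rintro ⟨h | h, hW⟩
      · exact ⟨h, hW⟩
      · exact absurd (hTW' h) hW
    · rintro ⟨h, hW⟩; exact ⟨Or.inl h, hW⟩
  rw [hdiff] at hΦsub
  set Q := W' \ T with hQ
  have hQB' : Q ⊆ B' := by
    rintro x ⟨hx, hxT⟩
    rcases hW's hx with h | h
    · exact h
    · exact absurd h hxT
  have hW'eq : W' = Q ∪ T := by rw [hQ, diff_union_of_subset hTW']
  have hΦQindep : M.Indep (Φ ∪ Q) :=
    hB'.indep.subset (union_subset (hΦsub.trans diff_subset) hQB')
  obtain ⟨B6, hB6, hsub6, hB6sub⟩ := hΦQindep.exists_isBase_subset_union_isBase hW'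
  have hQW' : Q ⊆ W' := diff_subset
  have hB6sub' : B6 ⊆ Φ ∪ W' := hB6sub.trans
    (union_subset (union_subset subset_union_left (hQW'.trans subset_union_right))
      subset_union_right)
  set T6 := B6 ∩ T with hT6
  have hΦW'dj : Disjoint Φ W' := Set.disjoint_left.mpr (fun x hx => (hΦsub hx).2)
  have hd1 : W' \ B6 = T \ T6 := by
    rw [hW'eq]
    ext x
    simp only [mem_diff, mem_union, hT6, mem_inter_iff]
    constructor
    · rintro ⟨h | h, hx6⟩
      · exact absurd (hsub6 (Or.inr h)) hx6
      · exact ⟨h, fun ⟨h6, _⟩ => hx6 h6⟩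
    · rintro ⟨hxT, hx⟩
      exact ⟨Or.inr hxT, fun h6 => hx ⟨h6, hxT⟩⟩
  have hd2 : B6 \ W' = Φ := by
    apply Set.Subset.antisymm
    · rintro x ⟨hx6, hxW'⟩
      rcases hB6sub' hx6 with h | h
      · exact h
      · exact absurd h hxW'
    · intro x hx
      exact ⟨hsub6 (Or.inl hx), Set.disjoint_left.mp hΦW'dj hx⟩
  have hcard : (T \ T6).encard = k + 1 := by
    rw [← hd1, hW'.encard_sdiff_comm hB6, hd2, hΦcard]
  -- B ∪ T6 is spanning
  have hBT6E : B ∪ T6 ⊆ M.E := union_subset (hBX.trans hX)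
    ((inter_subset_right).trans (hTZ.trans diff_subset))
  have hspan : M.Spanning (B ∪ T6) := by
    rw [spanning_iff_ground_subset_closure hBT6E]
    have hsub : B6 ⊆ M.closure (B ∪ T6) := by
      intro x hx
      by_cases hxT : x ∈ T
      · exact M.subset_closure _ hBT6E (Or.inr ⟨hx, hxT⟩)
      · have hxB' : x ∈ Φ ∪ Q := by
          rcases hB6sub' hx with h | h
          · exact Or.inl h
          · rw [hW'eq] at h
            rcases h with h | h
            · exact Or.inr h
            · exact absurd h hxT
        have hxX : x ∈ X := by
          rcases hxB' with h | h
          · exact hB'X (hΦsub h).1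
          · exact hB'X (hQB' h)
        exact (M.closure_subset_closure subset_union_left) (hB.subset_closure hxX)
    have := closure_subset_closure_of_subset_closure hsub
    rw [hB6.closure_eq] at this
    exact this
  obtain ⟨B7, hB7, hB7sub⟩ := hspan.exists_isBase_subset
  have heq : ((B ∪ T) \ W).encard = ((B ∪ T) \ B7).encard :=
    nullity_welldef hW hB7 hWs (hB7sub.trans (union_subset_union_right _ inter_subset_right))
  have hTT6sub : T \ T6 ⊆ (B ∪ T) \ B7 := by
    rintro x ⟨hxT, hxT6⟩
    refine ⟨Or.inr hxT, fun hx7 => ?_⟩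
    rcases hB7sub hx7 with h | h
    · exact (hTXdj.ne_of_mem hxT (hBX h)) rfl
    · exact hxT6 h
  have : k + 1 ≤ k := by
    rw [← hcard, hk]
    calc (T \ T6).encard ≤ ((B ∪ T) \ B7).encard := encard_mono hTT6sub
    _ = ((B ∪ T) \ W).encard := heq.symm
  exact absurd ((ENat.add_one_le_iff hkne).mp this) (lt_irrefl k)


variable {Bb B7 : Set α}

/-- The connectivity equals the number of elements of `Bb ∪ T` outside a base `B7` of `M`,
for any basis `Bb` of `X`, basis `T` of `M.E \ X`, and base `B7 ⊆ Bb ∪ T`. -/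
lemma matConn_eq (hX : X ⊆ M.E) (hBb : M.IsBasis Bb X) (hT : M.IsBasis T (M.E \ X))
    (hB7 : M.IsBase B7) (h7 : B7 ⊆ Bb ∪ T) :
    matConn M X = ((Bb ∪ T) \ B7).encard := by
  have hXd : X ⊆ M✶.E := by rwa [dual_ground]
  -- existence of a pair
  obtain ⟨J, hJ⟩ := M✶.exists_isBasis X hXd
  have hA₀ : (M.contractOnto X).IsBase (X \ J) := by
    rw [Matroid.contractOnto, dual_isBase_iff']
    refine ⟨?_, by simpa using diff_subset⟩
    rw [show (M✶ ↾ X).E = X from rfl, diff_diff_cancel_left hJ.subset]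
    exact hJ.isBase_restrict
  have hA₀T : M.IsBase ((X \ J) ∪ T) := contractOnto_base_union hX hA₀ hT
  have hA₀indep : M.Indep (X \ J) := hA₀T.indep.subset subset_union_left
  obtain ⟨B₀, hB₀, hA₀B₀⟩ := hA₀indep.subset_isBasis_of_subset diff_subset hX
  have hnonempty : Nonempty {p : Set α × Set α //
      (M ↾ X).IsBase p.1 ∧ (M.contractOnto X).IsBase p.2 ∧ p.2 ⊆ p.1} :=
    ⟨⟨(B₀, X \ J), hB₀.isBase_restrict, hA₀, hA₀B₀⟩⟩
  -- normalized version of B7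
  obtain ⟨B5, hB5, hTB5, hB5sub⟩ := hT.indep.exists_isBase_subset_union_isBase hB7
  have hB5sub' : B5 ⊆ Bb ∪ T := hB5sub.trans
    (union_subset subset_union_right h7)
  have hB7B5 : ((Bb ∪ T) \ B7).encard = ((Bb ∪ T) \ B5).encard :=
    nullity_welldef hB7 hB5 h7 hB5sub'
  -- all pairs have the same value
  have key : ∀ p : {p : Set α × Set α //
      (M ↾ X).IsBase p.1 ∧ (M.contractOnto X).IsBase p.2 ∧ p.2 ⊆ p.1},
      ((p : Set α × Set α).1 \ (p : Set α × Set α).2).encard = ((Bb ∪ T) \ B7).encard := by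
    rintro ⟨⟨P, A⟩, hP, hA, hAP⟩
    simp only
    have hPbasis : M.IsBasis P X := (isBase_restrict_iff hX).mp hP
    have hPX : P ⊆ X := hPbasis.subset
    have hAT : M.IsBase (A ∪ T) := contractOnto_base_union hX hA hT
    have hATsub : A ∪ T ⊆ P ∪ T := union_subset_union_left _ hAP
    have hTdjP : Disjoint T P := Set.disjoint_left.mpr
      (fun x hx hxP => (hT.subset hx).2 (hPX hxP))
    have hval : (P \ A).encard = ((P ∪ T) \ (A ∪ T)).encard := by
      congr 1
      ext x
      simp only [mem_diff, mem_union]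
      constructor
      · rintro ⟨hxP, hxA⟩
        exact ⟨Or.inl hxP, fun h => h.elim hxA
          (fun hxT => (hTdjP.ne_of_mem hxT hxP) rfl)⟩
      · rintro ⟨h, hx⟩
        rcases h with h | h
        · exact ⟨h, fun hA' => hx (Or.inl hA')⟩
        · exact absurd (Or.inr h) hx
    rw [hval]
    refine le_antisymm ?_ ?_
    · exact (star_aux hX hBb hPbasis hT hB5 hB5sub' hAT hATsub subset_union_right).trans_eq
        hB7B5.symm
    · exact hB7B5.trans_le (star_aux hX hPbasis hBb hT hAT hATsub hB5 hB5sub' hTB5)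
  rw [matConn, iInf_congr key, iInf_const]

end MatConnAux

theorem stmt19 {α : Type*} (M : Matroid α) (C D : Set α)
    (hC : C ⊆ M.E) (hD : D ⊆ M.E) (hCD : Disjoint C D) :
    matConn M (C ∪ D) = matConn (M.con C) D + matConn (M.del D) C := by
  classical
  open MatConnAux in
  have hX : C ∪ D ⊆ M.E := union_subset hC hD
  set Z : Set α := M.E \ (C ∪ D) with hZdef
  have hZE : Z ⊆ M.E := diff_subset
  have hZC : Disjoint Z C := Set.disjoint_left.mpr (fun x hx h => hx.2 (Or.inl h))
  have hZD : Disjoint Z D := Set.disjoint_left.mpr (fun x hx h => hx.2 (Or.inr h))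
  have hEXZ : M.E ⊆ (C ∪ D) ∪ Z := fun x hx =>
    (em (x ∈ C ∪ D)).elim Or.inl (fun h => Or.inr ⟨hx, h⟩)
  -- basis of C
  obtain ⟨BC, hBC⟩ := M.exists_isBasis C hC
  have hBCC : BC ⊆ C := hBC.subset
  -- basis of C ∪ Z extending BC
  have hCZE : C ∪ Z ⊆ M.E := union_subset hC hZE
  obtain ⟨WCZ, hWCZ, hBCW⟩ := hBC.indep.subset_isBasis_of_subset
    (hBCC.trans subset_union_left) hCZE
  have hWCZ_C : WCZ ∩ C = BC :=
    (hBC.eq_of_subset_indep (hWCZ.indep.inter_right C)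
      (subset_inter hBCW hBCC) inter_subset_right).symm
  set TN : Set α := WCZ \ BC with hTNdef
  have hWCZeq : BC ∪ TN = WCZ := union_diff_cancel hBCW
  have hTNZ : TN ⊆ Z := by
    rintro x ⟨hxW, hxBC⟩
    rcases hWCZ.subset hxW with h | h
    · exact absurd (hWCZ_C ▸ (⟨hxW, h⟩ : x ∈ WCZ ∩ C)) hxBC
    · exact h
  -- basis of Z extending TN
  obtain ⟨TZ, hTZ, hTNTZ⟩ := (hWCZ.indep.subset diff_subset).subset_isBasis_of_subset hTNZ hZE
  have hTZZ : TZ ⊆ Z := hTZ.subset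
  -- basis of X extending BC
  obtain ⟨BX, hBX, hBCBX⟩ := hBC.indep.subset_isBasis_of_subset
    (hBCC.trans subset_union_left) hX
  have hBXX : BX ⊆ C ∪ D := hBX.subset
  have hBX_C : BX ∩ C = BC :=
    (hBC.eq_of_subset_indep (hBX.indep.inter_right C)
      (subset_inter hBCBX hBCC) inter_subset_right).symm
  set BD : Set α := BX \ BC with hBDdef
  have hBXeq : BC ∪ BD = BX := union_diff_cancel hBCBX
  have hBDD : BD ⊆ D := by
    rintro x ⟨hxB, hxBC⟩
    rcases hBXX hxB with h | h
    · exact absurd (hBX_C ▸ (⟨hxB, h⟩ : x ∈ BX ∩ C)) hxBC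
    · exact h
  -- global base Bf with WCZ ⊆ Bf ⊆ BX ∪ WCZ
  have hspan1 : M.Spanning (BX ∪ WCZ) := by
    rw [spanning_iff_ground_subset_closure
      (union_subset hBX.indep.subset_ground hWCZ.indep.subset_ground)]
    intro x hx
    rcases hEXZ hx with h | h
    · exact (M.closure_subset_closure subset_union_left) (hBX.subset_closure h)
    · exact (M.closure_subset_closure subset_union_right) (hWCZ.subset_closure (Or.inr h))
  obtain ⟨Bs, hBs, hBssub⟩ := hspan1.exists_isBase_subset
  obtain ⟨Bf, hBf, hWBf, hBfsub⟩ := hWCZ.indep.exists_isBase_subset_union_isBase hBs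
  have hBfsub' : Bf ⊆ BX ∪ WCZ := hBfsub.trans (union_subset subset_union_right hBssub)
  have hBCBf : BC ⊆ Bf := hBCW.trans hWBf
  have hBf_C : Bf ∩ C = BC := by
    apply Set.Subset.antisymm
    · rintro x ⟨hxf, hxC⟩
      rcases hBfsub' hxf with h | h
      · exact hBX_C ▸ (⟨h, hxC⟩ : x ∈ BX ∩ C)
      · exact hWCZ_C ▸ (⟨h, hxC⟩ : x ∈ WCZ ∩ C)
    · exact subset_inter hBCBf hBCC
  -- LHS via matConn_eq
  have hBfBXTZ : Bf ⊆ BX ∪ TZ := by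
    intro x hxf
    rcases hBfsub' hxf with h | h
    · exact Or.inl h
    · rcases hWCZeq ▸ h with h' | h'
      · exact Or.inl (hBCBX h')
      · exact Or.inr (hTNTZ h')
  have hLHS : matConn M (C ∪ D) = ((BX ∪ TZ) \ Bf).encard :=
    matConn_eq hX hBX (by rwa [← hZdef]) hBf hBfBXTZ
  -- deletion part
  have hEDeq : M.E \ D = C ∪ Z := by
    ext x
    constructor
    · rintro ⟨hxE, hxD⟩
      rcases hEXZ hxE with h | h
      · rcases h with h | h
        · exact Or.inl h
        · exact absurd h hxD
      · exact Or.inr h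
    · rintro (h | h)
      · exact ⟨hC h, fun hd => (hCD.ne_of_mem h hd) rfl⟩
      · exact ⟨h.1, fun hd => h.2 (Or.inr hd)⟩
  have hrr : M.del D ≤r M := restrict_isRestriction M _ diff_subset
  have hCsub' : C ⊆ (M.del D).E := by
    rw [del_ground, hEDeq]; exact subset_union_left
  have hBC_del : (M.del D).IsBasis BC C := hBC.isBasis_isRestriction hrr hCsub'
  have hgrdel : (M.del D).E \ C = Z := by
    rw [del_ground, hEDeq]
    ext x
    constructor
    · rintro ⟨h | h, hxC⟩
      · exact absurd h hxC
      · exact h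
    · intro h
      exact ⟨Or.inr h, fun hc => (hZC.ne_of_mem h hc) rfl⟩
  have hTZ_del : (M.del D).IsBasis TZ ((M.del D).E \ C) := by
    rw [hgrdel]
    exact hTZ.isBasis_isRestriction hrr (by rw [del_ground, hEDeq]; exact subset_union_right)
  have hWCZ_del : (M.del D).IsBase WCZ := by
    rw [Matroid.del, isBase_restrict_iff', isBasis'_iff_isBasis diff_subset, hEDeq]
    exact hWCZ
  have hWsub : WCZ ⊆ BC ∪ TZ := by
    rw [← hWCZeq]; exact union_subset_union_right _ hTNTZ
  have hdel : matConn (M.del D) C = ((BC ∪ TZ) \ WCZ).encard :=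
    matConn_eq hCsub' hBC_del hTZ_del hWCZ_del hWsub
  have hdelval : (BC ∪ TZ) \ WCZ = TZ \ TN := by
    rw [← hWCZeq]
    ext x
    simp only [mem_diff, mem_union]
    constructor
    · rintro ⟨h | h, hn⟩
      · exact absurd (Or.inl h) hn
      · exact ⟨h, fun ht => hn (Or.inr ht)⟩
    · rintro ⟨hxTZ, hxTN⟩
      exact ⟨Or.inr hxTZ, fun h => h.elim
        (fun hc => (hZC.ne_of_mem (hTZZ hxTZ) (hBCC hc)) rfl) hxTN⟩
  -- contraction part
  have hDsub' : D ⊆ (M.con C).E := by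
    rw [con_ground]; exact subset_diff.mpr ⟨hD, hCD.symm⟩
  set W2 : Set α := Bf \ BC with hW2def
  have hW2dj : Disjoint W2 C := Set.disjoint_left.mpr
    (fun x hx hc => hx.2 (hBf_C ▸ (⟨hx.1, hc⟩ : x ∈ Bf ∩ C)))
  have hW2base : (M.con C).IsBase W2 :=
    con_base_of hC hBC (by rwa [diff_union_of_subset hBCBf]) hW2dj
  have hconInd : ∀ J, (M.con C).Indep J → M.Indep (BC ∪ J) := by
    intro J hJ
    obtain ⟨Bt, hBt, hJBt⟩ := hJ.exists_isBase_superset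
    have hBt' : (M.contractOnto (M.E \ C)).IsBase Bt := hBt
    have hbase : M.IsBase (Bt ∪ BC) :=
      contractOnto_base_union diff_subset hBt'
        (by rwa [diff_diff_cancel_left hC])
    exact hbase.indep.subset (by
      rw [union_comm]
      exact union_subset_union_left _ hJBt)
  -- (M.con C).IsBasis BD D
  have hspan2 : M.Spanning (BX ∪ TZ) := by
    rw [spanning_iff_ground_subset_closure
      (union_subset hBX.indep.subset_ground hTZ.indep.subset_ground)]
    intro x hx
    rcases hEXZ hx with h | h
    · exact (M.closure_subset_closure subset_union_left) (hBX.subset_closure h)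
    · exact (M.closure_subset_closure subset_union_right) (hTZ.subset_closure h)
  obtain ⟨Bs2, hBs2, hBs2sub⟩ := hspan2.exists_isBase_subset
  obtain ⟨B10, hB10, hBXB10, hB10sub⟩ := hBX.indep.exists_isBase_subset_union_isBase hBs2
  have hB10sub' : B10 ⊆ BX ∪ TZ := hB10sub.trans (union_subset subset_union_left hBs2sub)
  have hBCB10 : BC ⊆ B10 := hBCBX.trans hBXB10
  have hB10C : B10 ∩ C = BC := by
    apply Set.Subset.antisymm
    · rintro x ⟨hx10, hxC⟩
      rcases hB10sub' hx10 with h | h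
      · exact hBX_C ▸ (⟨h, hxC⟩ : x ∈ BX ∩ C)
      · exact absurd (hZC.ne_of_mem (hTZZ h) hxC) (fun hne => hne rfl)
    · exact subset_inter hBCB10 hBCC
  have hB10dj : Disjoint (B10 \ BC) C := Set.disjoint_left.mpr
    (fun x hx hc => hx.2 (hB10C ▸ (⟨hx.1, hc⟩ : x ∈ B10 ∩ C)))
  have hB10base : (M.con C).IsBase (B10 \ BC) :=
    con_base_of hC hBC (by rwa [diff_union_of_subset hBCB10]) hB10dj
  have hBD_con : (M.con C).IsBasis BD D := by
    have hBDind : (M.con C).Indep BD :=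
      hB10base.indep.subset (diff_subset_diff_left hBXB10)
    refine hBDind.isBasis_of_maximal_subset hBDD ?_ hDsub'
    intro J hJ hBDJ hJD
    have hind := hconInd J hJ
    have heq : BX = BC ∪ J :=
      hBX.eq_of_subset_indep hind
        (by rw [← hBXeq]; exact union_subset_union_right _ hBDJ)
        (union_subset (hBCC.trans subset_union_left) (hJD.trans subset_union_right))
    intro x hxJ
    refine ⟨heq ▸ Or.inr hxJ, fun hc => ?_⟩
    exact (hCD.ne_of_mem (hBCC hc) (hJD hxJ)) rfl
  -- (M.con C).IsBasis TN Z
  have hZsub' : Z ⊆ (M.con C).E := by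
    rw [con_ground]
    exact fun x hx => ⟨hx.1, fun hc => hx.2 (Or.inl hc)⟩
  have hTN_con : (M.con C).IsBasis TN ((M.con C).E \ D) := by
    have hgr2 : (M.con C).E \ D = Z := by
      rw [con_ground, diff_diff, hZdef]
    rw [hgr2]
    have hTNind : (M.con C).Indep TN :=
      hW2base.indep.subset (diff_subset_diff_left hWBf)
    refine hTNind.isBasis_of_maximal_subset hTNZ ?_ hZsub'
    intro J hJ hTNJ hJZ
    have hind := hconInd J hJ
    have heq : WCZ = BC ∪ J :=
      hWCZ.eq_of_subset_indep hind
        (by rw [← hWCZeq]; exact union_subset_union_right _ hTNJ)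
        (union_subset (hBCC.trans subset_union_left) (hJZ.trans subset_union_right))
    intro x hxJ
    refine ⟨heq ▸ Or.inr hxJ, fun hc => ?_⟩
    exact (hZC.ne_of_mem (hJZ hxJ) (hBCC hc)) rfl
  have hW2sub : W2 ⊆ BD ∪ TN := by
    rintro x ⟨hxf, hxBC⟩
    rcases hBfsub' hxf with h | h
    · exact Or.inl ⟨h, hxBC⟩
    · exact Or.inr ⟨h, hxBC⟩
  have hcon : matConn (M.con C) D = ((BD ∪ TN) \ W2).encard :=
    matConn_eq hDsub' hBD_con hTN_con hW2base hW2sub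
  -- final set arithmetic
  have hBDBC : Disjoint BD BC := Set.disjoint_left.mpr (fun x hx => hx.2)
  have hTNBC : Disjoint TN BC := Set.disjoint_left.mpr (fun x hx => hx.2)
  have hconval : (BD ∪ TN) \ W2 = (BD ∪ TN) \ Bf := by
    ext x
    simp only [mem_diff, hW2def, mem_union]
    constructor
    · rintro ⟨hx, hn⟩
      refine ⟨hx, fun hf => hn ⟨hf, fun hbc => ?_⟩⟩
      rcases hx with h | h
      · exact (hBDBC.ne_of_mem h hbc) rfl
      · exact (hTNBC.ne_of_mem h hbc) rfl
    · rintro ⟨hx, hn⟩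
      exact ⟨hx, fun hf => hn hf.1⟩
  have hsplit : (BX ∪ TZ) \ Bf = ((BD ∪ TN) \ Bf) ∪ (TZ \ TN) := by
    ext x
    simp only [mem_diff, mem_union]
    constructor
    · rintro ⟨h, hn⟩
      rcases h with h | h
      · rcases (hBXeq ▸ h : x ∈ BC ∪ BD) with h' | h'
        · exact absurd (hBCBf h') hn
        · exact Or.inl ⟨Or.inl h', hn⟩
      · by_cases hxTN : x ∈ TN
        · exact Or.inl ⟨Or.inr hxTN, hn⟩
        · exact Or.inr ⟨h, hxTN⟩
    · rintro (⟨h, hn⟩ | ⟨h, hn⟩)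
      · refine ⟨?_, hn⟩
        rcases h with h' | h'
        · exact Or.inl (hBXeq ▸ Or.inr h')
        · exact Or.inr (hTNTZ h')
      · refine ⟨Or.inr h, fun hf => ?_⟩
        rcases hBfsub' hf with h' | h'
        · rcases hBXX h' with hc | hd
          · exact (hZC.ne_of_mem (hTZZ h) hc) rfl
          · exact (hZD.ne_of_mem (hTZZ h) hd) rfl
        · rcases (hWCZeq ▸ h' : x ∈ BC ∪ TN) with h'' | h''
          · exact (hZC.ne_of_mem (hTZZ h) (hBCC h'')) rfl
          · exact hn h''
  have hdisj : Disjoint ((BD ∪ TN) \ Bf) (TZ \ TN) := by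
    rw [Set.disjoint_left]
    rintro x ⟨h, -⟩ ⟨hxTZ, hxTN⟩
    rcases h with h | h
    · exact (hZD.ne_of_mem (hTZZ hxTZ) (hBDD h)) rfl
    · exact hxTN h
  rw [hLHS, hcon, hdel, hconval, hdelval, hsplit, encard_union_eq hdisj]
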